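/- Let Λ be a finite measure on [0,1] with Λ{0} = Λ{1} = 0. For integers 1 ≤ i < j, define Γ̃_{i,≥j} = Σ_{k ≥ j-i} C(k+i, k+1) ∫_{[0,1]} x^{k-1} (1-x)^i Λ(dx) and Λ_{j,≤i} = Σ_{k = j-i}^{j-1} C(j, k+1) ∫_{[0,1]} x^{k-1} (1-x)^{j-k-1} Λ(dx). Then Γ̃_{i,≥j} = Λ_{j,≤i}. -/

import Mathlib

open MeasureTheory Finset
open scoped ENNReal NNReal

lemma pascalF (x : ℝ) (n : ℕ) : ∀ r, r ≤ n →
    ∑ l ∈ range (r+1), ((n+1).choose l : ℝ) * x^l * (1-x)^(n+1-l)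
      = ∑ l ∈ range (r+1), (n.choose l : ℝ) * x^l * (1-x)^(n-l)
        - (n.choose r : ℝ) * x^(r+1) * (1-x)^(n-r) := by
  intro r
  induction r with
  | zero =>
    intro _
    rw [Finset.sum_range_one, Finset.sum_range_one]
    simp only [Nat.choose_zero_right, Nat.cast_one, pow_zero, Nat.sub_zero, one_mul, mul_one]
    rw [pow_succ]; ring
  | succ r ih =>
    intro hr
    have hrn : r ≤ n := Nat.le_of_succ_le hr
    rw [Finset.sum_range_succ (fun l => ((n+1).choose l : ℝ) * x^l * (1-x)^(n+1-l)) (r+1),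
      Finset.sum_range_succ (fun l => (n.choose l : ℝ) * x^l * (1-x)^(n-l)) (r+1),
      ih hrn]
    have e1 : n + 1 - (r+1) = n - r := by omega
    have e3 : ((n+1).choose (r+1) : ℝ) = (n.choose r : ℝ) + (n.choose (r+1) : ℝ) := by
      rw [Nat.choose_succ_succ']; push_cast; ring
    have e2 : n - r = (n - (r+1)) + 1 := by omega
    rw [e1, e3, e2]
    ring

lemma polyP (i : ℕ) (hi : 1 ≤ i) (x : ℝ) : ∀ d : ℕ,
    ∑ l ∈ range (d+1), ((i+d).choose l : ℝ) * x^l * (1-x)^(i+d-l)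
      = (1-x)^i * ∑ t ∈ range (d+1), ((t+(i-1)).choose (i-1) : ℝ) * x^t := by
  intro d
  induction d with
  | zero => simp
  | succ d ih =>
    have e1 : i + (d+1) = (i+d) + 1 := by omega
    rw [e1, pascalF x (i+d) (d+1) (by omega),
      Finset.sum_range_succ (fun l => ((i+d).choose l : ℝ) * x^l * (1-x)^(i+d-l)) (d+1),
      ih,
      Finset.sum_range_succ (fun t => ((t+(i-1)).choose (i-1) : ℝ) * x^t) (d+1)]
    have e2 : i + d - (d+1) = i - 1 := by omega
    have e3 : (d+1) + (i-1) = i + d := by omega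
    have e4 : (i+d).choose (d+1) = (i+d).choose (i-1) := by
      have h := Nat.choose_symm (show d+1 ≤ i+d by omega)
      rwa [show i+d-(d+1) = i-1 by omega, eq_comm] at h
    have e5 : (1-x)^i = (1-x)^(i-1) * (1-x) := by
      rw [← pow_succ]; congr 1; omega
    rw [e2, e3, e4, e5]
    ring

lemma key (i d : ℕ) (hi : 1 ≤ i) (hd : 1 ≤ d) {x : ℝ} (hx0 : 0 < x) (hx1 : x < 1) :
    HasSum (fun m : ℕ => ((m + (i + d)).choose (m + d + 1) : ℝ) *
        (x ^ (m + d - 1) * (1 - x) ^ i))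
      (∑ k ∈ Finset.Ico d (i + d), (((i + d).choose (k + 1) : ℝ)) *
        (x ^ (k - 1) * (1 - x) ^ (i + d - k - 1))) := by
  have hxn : ‖x‖ < 1 := by rw [Real.norm_eq_abs, abs_of_pos hx0]; exact hx1
  have h1x : (1:ℝ) - x ≠ 0 := by intro h; nlinarith
  have hA : HasSum (fun n : ℕ => ((n + (i-1)).choose (i-1) : ℝ) * x ^ n)
      (1 / (1-x)^((i-1)+1)) := hasSum_choose_mul_geometric_of_norm_lt_one (i-1) hxn
  have hii : (i-1)+1 = i := by omega
  rw [hii] at hA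
  have h2 : HasSum (fun m : ℕ => ((m + (d+1) + (i-1)).choose (i-1) : ℝ) * x ^ (m + (d+1)))
      (1/(1-x)^i - ∑ t ∈ range (d+1), ((t+(i-1)).choose (i-1):ℝ) * x^t) :=
    (hasSum_nat_add_iff' (d+1)).mpr hA
  have h3 := h2.mul_left ((1-x)^i)
  have hfun : (fun m : ℕ => (1-x)^i * (((m + (d+1) + (i-1)).choose (i-1) : ℝ) * x ^ (m + (d+1))))
      = fun m : ℕ => x^2 * (((m + (i + d)).choose (m + d + 1) : ℝ) *
        (x ^ (m + d - 1) * (1 - x) ^ i)) := by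
    funext m
    have hcn : (m + (i + d)).choose (m + d + 1) = (m + (d+1) + (i-1)).choose (i-1) := by
      have h := Nat.choose_symm (show m+d+1 ≤ m+(i+d) by omega)
      rw [show m+(i+d)-(m+d+1) = i-1 by omega] at h
      rw [show m+(d+1)+(i-1) = m+(i+d) by omega]
      exact h.symm
    have e2 : m + (d+1) = (m + d - 1) + 2 := by omega
    rw [hcn, e2]
    ring
  rw [hfun] at h3
  have hval : (1-x)^i * (1/(1-x)^i - ∑ t ∈ range (d+1), ((t+(i-1)).choose (i-1):ℝ) * x^t)
      = x^2 * ∑ k ∈ Finset.Ico d (i + d), (((i + d).choose (k + 1) : ℝ)) *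
        (x ^ (k - 1) * (1 - x) ^ (i + d - k - 1)) := by
    rw [mul_sub, mul_one_div, div_self (pow_ne_zero i h1x), ← polyP i hi x d]
    have hbin : ∑ l ∈ range ((i+d)+1), ((i+d).choose l : ℝ) * x^l * (1-x)^(i+d-l) = 1 := by
      calc ∑ l ∈ range ((i+d)+1), ((i+d).choose l : ℝ) * x^l * (1-x)^(i+d-l)
          = ∑ l ∈ range ((i+d)+1), x^l * (1-x)^(i+d-l) * ((i+d).choose l : ℝ) :=
            Finset.sum_congr rfl (fun l _ => by ring)
        _ = (x + (1-x))^(i+d) := (add_pow x (1-x) (i+d)).symm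
        _ = 1 := by rw [show x + (1-x) = 1 by ring, one_pow]
    have hsplit := Finset.sum_Ico_consecutive
      (fun l => ((i+d).choose l : ℝ) * x^l * (1-x)^(i+d-l))
      (Nat.zero_le (d+1)) (show d+1 ≤ (i+d)+1 by omega)
    simp only [Nat.Ico_zero_eq_range] at hsplit
    have hre : x^2 * ∑ k ∈ Finset.Ico d (i + d), (((i + d).choose (k + 1) : ℝ)) *
          (x ^ (k - 1) * (1 - x) ^ (i + d - k - 1))
        = ∑ l ∈ Finset.Ico (d+1) ((i+d)+1), ((i+d).choose l : ℝ) * x^l * (1-x)^(i+d-l) := by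
      rw [Finset.mul_sum, Finset.sum_Ico_eq_sum_range, Finset.sum_Ico_eq_sum_range]
      rw [show i + d - d = i by omega, show i + d + 1 - (d+1) = i by omega]
      refine Finset.sum_congr rfl (fun t _ => ?_)
      have a1 : d + 1 + t = d + t + 1 := by omega
      rw [a1]
      have a2 : x ^ (d + t + 1) = x^2 * x ^ (d + t - 1) := by
        rw [← pow_add]; congr 1; omega
      have a3 : i + d - (d + t + 1) = i + d - (d + t) - 1 := by omega
      rw [a2, a3]
      ring
    rw [hre]
    rw [hbin] at hsplit
    linarith [hsplit]
  rw [hval] at h3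
  exact (hasSum_mul_left_iff (pow_ne_zero 2 (ne_of_gt hx0))).mp h3

theorem stmt_3 (Λ : Measure ℝ) [IsFiniteMeasure Λ]
    (h0 : Λ {0} = 0) (h1 : Λ {1} = 0) (i j : ℕ) (hi : 1 ≤ i) (hij : i < j) :
    (∑' m : ℕ, (((m + j).choose (m + (j - i) + 1) : ℝ) *
        ∫ x in Set.Icc (0:ℝ) 1, x ^ (m + (j - i) - 1) * (1 - x) ^ i ∂Λ)) =
      ∑ k ∈ Finset.Ico (j - i) j, ((j.choose (k + 1) : ℝ) *
        ∫ x in Set.Icc (0:ℝ) 1, x ^ (k - 1) * (1 - x) ^ (j - k - 1) ∂Λ) := by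
  obtain ⟨d, hd1, rfl⟩ : ∃ d, 1 ≤ d ∧ j = i + d := ⟨j - i, by omega, by omega⟩
  simp only [Nat.add_sub_cancel_left]
  set μ := Λ.restrict (Set.Icc (0:ℝ) 1) with hμ
  set f : ℕ → ℝ → ℝ := fun m x =>
    ((m + (i + d)).choose (m + d + 1) : ℝ) * (x ^ (m + d - 1) * (1 - x) ^ i) with hf
  have hcont : ∀ m, Continuous (f m) := by
    intro m; rw [hf]; fun_prop
  have hmeas : ∀ m, AEStronglyMeasurable (f m) μ := fun m => (hcont m).aestronglyMeasurable
  -- a.e. facts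
  have h0' : μ {0} = 0 :=
    le_antisymm (le_trans (Measure.restrict_apply_le _ _) h0.le) zero_le
  have h1' : μ {1} = 0 :=
    le_antisymm (le_trans (Measure.restrict_apply_le _ _) h1.le) zero_le
  have hae : ∀ᵐ x ∂μ, 0 < x ∧ x < 1 := by
    have hmem : ∀ᵐ x ∂μ, x ∈ Set.Icc (0:ℝ) 1 := ae_restrict_mem measurableSet_Icc
    have hne0 : ∀ᵐ x ∂μ, x ≠ 0 := by
      rw [ae_iff, show {x : ℝ | ¬ x ≠ 0} = {0} by ext y; simp]; exact h0'
    have hne1 : ∀ᵐ x ∂μ, x ≠ 1 := by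
      rw [ae_iff, show {x : ℝ | ¬ x ≠ 1} = {1} by ext y; simp]; exact h1'
    filter_upwards [hmem, hne0, hne1] with x hx hx0 hx1
    exact ⟨lt_of_le_of_ne hx.1 (Ne.symm hx0), lt_of_le_of_ne hx.2 hx1⟩
  have hkey : ∀ᵐ x ∂μ, HasSum (fun m => f m x)
      (∑ k ∈ Finset.Ico d (i+d), ((i+d).choose (k+1) : ℝ) *
        (x^(k-1) * (1-x)^(i+d-k-1))) := by
    filter_upwards [hae] with x hx
    exact key i d hi hd1 hx.1 hx.2
  set C : ℝ := ∑ k ∈ Finset.Ico d (i+d), ((i+d).choose (k+1) : ℝ) with hCdef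
  have hbound : ∀ᵐ x ∂μ, (∑' m, (‖f m x‖₊ : ℝ≥0∞)) ≤ ENNReal.ofReal C := by
    filter_upwards [hae, hkey] with x hx hk
    have hx0 : (0:ℝ) ≤ x := hx.1.le
    have hx1 : x ≤ 1 := hx.2.le
    have hnonneg : ∀ m, 0 ≤ f m x := fun m =>
      mul_nonneg (Nat.cast_nonneg _)
        (mul_nonneg (pow_nonneg hx0 _) (pow_nonneg (by linarith) _))
    have heq : (∑' m, (‖f m x‖₊ : ℝ≥0∞)) = ENNReal.ofReal (∑' m, f m x) := by
      rw [ENNReal.ofReal_tsum_of_nonneg hnonneg hk.summable]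
      refine tsum_congr (fun m => ?_)
      rw [← enorm_eq_nnnorm, ← ofReal_norm, Real.norm_of_nonneg (hnonneg m)]
    rw [heq, hk.tsum_eq]
    apply ENNReal.ofReal_le_ofReal
    refine Finset.sum_le_sum (fun k _ => ?_)
    have hle1 : x^(k-1) * (1-x)^(i+d-k-1) ≤ 1 :=
      mul_le_one₀ (pow_le_one₀ hx0 hx1) (pow_nonneg (by linarith) _)
        (pow_le_one₀ (by linarith) (by linarith))
    calc ((i+d).choose (k+1) : ℝ) * (x^(k-1) * (1-x)^(i+d-k-1))
        ≤ ((i+d).choose (k+1) : ℝ) * 1 := by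
          exact mul_le_mul_of_nonneg_left hle1 (Nat.cast_nonneg _)
      _ = ((i+d).choose (k+1) : ℝ) := mul_one _
  have hfin : (∑' m, ∫⁻ x, ‖f m x‖₊ ∂μ) ≠ ⊤ := by
    rw [← lintegral_tsum (f := fun m x => (‖f m x‖₊ : ℝ≥0∞)) (fun m => (hmeas m).enorm)]
    refine ne_of_lt (lt_of_le_of_lt (lintegral_mono_ae hbound) ?_)
    rw [lintegral_const]
    refine ENNReal.mul_lt_top ENNReal.ofReal_lt_top ?_
    exact lt_of_le_of_lt (Measure.restrict_apply_le _ _) (measure_lt_top Λ _)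
  have hint : ∀ k : ℕ, Integrable
      (fun x : ℝ => ((i+d).choose (k+1) : ℝ) * (x^(k-1) * (1-x)^(i+d-k-1))) μ := by
    intro k
    have hc : Continuous fun x : ℝ =>
        ((i+d).choose (k+1) : ℝ) * (x^(k-1) * (1-x)^(i+d-k-1)) := by fun_prop
    exact hc.integrableOn_Icc
  have step1 : (∑' m : ℕ, (((m + (i+d)).choose (m + d + 1) : ℝ) *
      ∫ x in Set.Icc (0:ℝ) 1, x ^ (m + d - 1) * (1 - x) ^ i ∂Λ))
      = ∑' m, ∫ x, f m x ∂μ := by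
    refine tsum_congr (fun m => ?_)
    exact (integral_const_mul _ _).symm
  rw [step1, ← integral_tsum hmeas hfin]
  have step3 : (∫ x, (∑' m, f m x) ∂μ)
      = ∫ x, (∑ k ∈ Finset.Ico d (i+d), ((i+d).choose (k+1) : ℝ) *
        (x^(k-1) * (1-x)^(i+d-k-1))) ∂μ :=
    integral_congr_ae (by filter_upwards [hkey] with x hx using hx.tsum_eq)
  rw [step3, integral_finset_sum _ (fun k _ => hint k)]
  refine Finset.sum_congr rfl (fun k _ => ?_)
  exact integral_const_mul _ _
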